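/- Let G be a simple edge-Δ-critical graph, xy ∈ E(G), φ ∈ C^Δ(G - xy), and q a positive number with Δ/2 < q ≤ Δ - d(x)/2 - 2. Let Z(φ) = {z ∈ N(x)\{y} : φ(xz) ∈ φ̄(y)} and S(φ) = {z ∈ N(x) \ (Z(φ) ∪ {y}) : the neighbor y' of y with φ(yy') = φ(xz) has d(y') < q}. Then |Z(φ) ∪ S(φ)| ≥ Δ - σ_q(x,y) - 1. -/

import Mathlib

open Finset
open scoped Classical

variable {V : Type*}

/-- `φ` is a proper edge coloring of `G` using colors `{1,…,k}`. -/
def IsProperEdgeColoring (G : SimpleGraph V) (k : ℕ) (φ : Sym2 V → ℕ) : Prop :=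
  (∀ e ∈ G.edgeSet, φ e ∈ Finset.Icc 1 k) ∧
  ∀ e ∈ G.edgeSet, ∀ f ∈ G.edgeSet, e ≠ f → (∃ v, v ∈ e ∧ v ∈ f) → φ e ≠ φ f

/-- The set of colors of `{1,…,k}` missing at `v` under `φ`. -/
noncomputable def missing (G : SimpleGraph V) (k : ℕ) (φ : Sym2 V → ℕ) (v : V) : Finset ℕ :=
  (Finset.Icc 1 k).filter (fun c => ∀ u, G.Adj v u → φ s(v, u) ≠ c)

/-- `G` is edge-`Δ`-critical: max degree `Δ`, `χ' = Δ+1`, and every proper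
subgraph is edge-`Δ`-colorable. -/
def EdgeCritical (G : SimpleGraph V) [Fintype V] (Δ : ℕ) : Prop :=
  G.maxDegree = Δ ∧
  ¬ (∃ φ, IsProperEdgeColoring G Δ φ) ∧
  (∃ φ, IsProperEdgeColoring G (Δ + 1) φ) ∧
  ∀ H : SimpleGraph V, H < G → ∃ φ, IsProperEdgeColoring H Δ φ

lemma two_le_degree_of_two_adj [Fintype V] {H : SimpleGraph V} {v a b : V} (hab : a ≠ b)
    (ha : H.Adj v a) (hb : H.Adj v b) : 2 ≤ H.degree v := by
  have hsub : ({a, b} : Finset V) ⊆ H.neighborFinset v := by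
    intro u hu
    rcases Finset.mem_insert.1 hu with rfl | hu
    · simpa using ha
    · rcases Finset.mem_singleton.1 hu with rfl
      simpa using hb
  calc 2 = ({a, b} : Finset V).card := (Finset.card_pair hab).symm
    _ ≤ _ := Finset.card_le_card hsub

lemma three_le_degree_of_three_adj [Fintype V] {H : SimpleGraph V} {v a b c : V} (hab : a ≠ b)
    (hac : a ≠ c) (hbc : b ≠ c) (ha : H.Adj v a) (hb : H.Adj v b) (hcadj : H.Adj v c) :
    3 ≤ H.degree v := by
  have hsub : ({a, b, c} : Finset V) ⊆ H.neighborFinset v := by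
    intro u hu
    simp only [Finset.mem_insert, Finset.mem_singleton] at hu
    rcases hu with rfl | rfl | rfl <;> simpa using (by assumption : H.Adj v u)
  have hcard : ({a, b, c} : Finset V).card = 3 := by
    rw [Finset.card_insert_of_notMem (by simp [hab, hac]), Finset.card_pair hbc]
  calc 3 = ({a, b, c} : Finset V).card := hcard.symm
    _ ≤ _ := Finset.card_le_card hsub

/-- An interior vertex of a path has two distinct neighbors on the path. -/
lemma interior_two_neighbors {H : SimpleGraph V} {s t : V} (p : H.Walk s t) (hp : p.IsPath)
    {w : V} (hw : w ∈ p.support) (hws : w ≠ s) (hwt : w ≠ t) :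
    ∃ v1 v2, v1 ≠ v2 ∧ H.Adj w v1 ∧ H.Adj w v2 ∧ v1 ∈ p.support ∧ v2 ∈ p.support := by
  induction p with
  | nil => simp at hw; exact absurd hw hws
  | @cons u u2 t h p ih =>
    rw [SimpleGraph.Walk.support_cons, List.mem_cons] at hw
    rcases hw with rfl | hw
    · exact absurd rfl hws
    by_cases hw2 : w = u2
    · subst hw2
      cases p with
      | nil => exact absurd rfl hwt
      | @cons _ u3 _ h2 p' =>
        have hu3mem : u3 ∈ (SimpleGraph.Walk.cons h2 p').support := by
          rw [SimpleGraph.Walk.support_cons]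
          exact List.mem_cons_of_mem _ p'.start_mem_support
        refine ⟨u, u3, ?_, h.symm, h2, by simp, ?_⟩
        · intro huu3
          have hnd := (SimpleGraph.Walk.isPath_def _).1 hp
          rw [SimpleGraph.Walk.support_cons, List.nodup_cons] at hnd
          exact hnd.1 (huu3 ▸ hu3mem)
        · rw [SimpleGraph.Walk.support_cons]
          exact List.mem_cons_of_mem _ hu3mem
    · obtain ⟨v1, v2, h12, h1, h2, hs1, hs2⟩ := ih hp.of_cons hw hw2 hwt
      rw [SimpleGraph.Walk.support_cons]
      exact ⟨v1, v2, h12, h1, h2, List.mem_cons_of_mem _ hs1, List.mem_cons_of_mem _ hs2⟩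

/-- A walk from outside a set to inside it crosses the boundary. -/
lemma exists_crossing {H : SimpleGraph V} {u t : V} (q : H.Walk u t) (S : Set V)
    (hu : u ∉ S) (ht : t ∈ S) : ∃ w w', w ∈ S ∧ w' ∉ S ∧ H.Adj w' w := by
  induction q with
  | nil => exact absurd ht hu
  | @cons a a2 t h q ih =>
    by_cases h2 : a2 ∈ S
    · exact ⟨a2, a, h2, hu, h⟩
    · exact ih h2 ht

lemma head_neighbor {H : SimpleGraph V} {s t : V} (p : H.Walk s t) (hst : s ≠ t) :
    ∃ v, H.Adj s v ∧ v ∈ p.support := by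
  cases p with
  | nil => exact absurd rfl hst
  | @cons _ u2 _ h p =>
    exact ⟨u2, h, by rw [SimpleGraph.Walk.support_cons]; exact List.mem_cons_of_mem _ p.start_mem_support⟩

/-- In a graph of max degree ≤ 2, three distinct vertices of degree ≤ 1 cannot be
mutually reachable. -/
lemma no_three_pendant [Fintype V] {H : SimpleGraph V} (hdeg : ∀ v, H.degree v ≤ 2)
    {a b c : V} (hab : a ≠ b) (hac : a ≠ c) (hbc : b ≠ c)
    (hda : H.degree a ≤ 1) (hdb : H.degree b ≤ 1) (hdc : H.degree c ≤ 1)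
    (hrab : H.Reachable a b) (hrac : H.Reachable a c) : False := by
  classical
  obtain ⟨p₀⟩ := hrab
  let P : H.Walk a b := (p₀.toPath : H.Path a b)
  have hP : P.IsPath := p₀.toPath.2
  by_cases hcP : c ∈ P.support
  · obtain ⟨v1, v2, h12, h1, h2, _, _⟩ := interior_two_neighbors P hP hcP hac.symm hbc.symm
    exact absurd (two_le_degree_of_two_adj h12 h1 h2) (by omega)
  · obtain ⟨q⟩ := hrac.symm
    obtain ⟨w, w', hwS, hw'S, hadj⟩ := exists_crossing q {v | v ∈ P.support} hcP P.start_mem_support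
    simp only [Set.mem_setOf_eq] at hwS hw'S
    by_cases hwa : w = a
    · subst hwa
      obtain ⟨v, hv, hvS⟩ := head_neighbor P hab
      have hne : w' ≠ v := fun h => hw'S (h ▸ hvS)
      exact absurd (two_le_degree_of_two_adj hne hadj.symm hv) (by omega)
    by_cases hwb : w = b
    · subst hwb
      obtain ⟨v, hv, hvS⟩ := head_neighbor P.reverse hab.symm
      rw [SimpleGraph.Walk.support_reverse, List.mem_reverse] at hvS
      have hne : w' ≠ v := fun h => hw'S (h ▸ hvS)
      exact absurd (two_le_degree_of_two_adj hne hadj.symm hv) (by omega)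
    · obtain ⟨v1, v2, h12, h1, h2, hs1, hs2⟩ := interior_two_neighbors P hP hwS hwa hwb
      have hn1 : w' ≠ v1 := fun h => hw'S (h ▸ hs1)
      have hn2 : w' ≠ v2 := fun h => hw'S (h ▸ hs2)
      exact absurd (three_le_degree_of_three_adj hn1 hn2 h12 hadj.symm h1 h2)
        (by have := hdeg w; omega)



lemma mem_missing {G : SimpleGraph V} {k : ℕ} {φ : Sym2 V → ℕ} {v : V} {c : ℕ} :
    c ∈ missing G k φ v ↔ c ∈ Finset.Icc 1 k ∧ ∀ u, G.Adj v u → φ s(v, u) ≠ c := by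
  simp [missing]

lemma proper_ne_colors {Γ : SimpleGraph V} {k : ℕ} {ψ : Sym2 V → ℕ}
    (h : IsProperEdgeColoring Γ k ψ) {v u1 u2 : V} (h1 : Γ.Adj v u1) (h2 : Γ.Adj v u2)
    (hne : u1 ≠ u2) : ψ s(v, u1) ≠ ψ s(v, u2) := by
  refine h.2 _ h1 _ h2 (fun he => hne (Sym2.congr_right.1 he)) ⟨v, by simp, by simp⟩

lemma le_card_missing (Γ : SimpleGraph V) [Fintype V] (k : ℕ) (ψ : Sym2 V → ℕ) (v : V) :
    k ≤ (missing Γ k ψ v).card + Γ.degree v := by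
  have hsub : Finset.Icc 1 k ⊆ missing Γ k ψ v ∪
      (Γ.neighborFinset v).image (fun u => ψ s(v, u)) := by
    intro c hcI
    by_cases hc : ∀ u, Γ.Adj v u → ψ s(v, u) ≠ c
    · exact Finset.mem_union_left _ (mem_missing.2 ⟨hcI, hc⟩)
    · push_neg at hc
      obtain ⟨u, hu, hcu⟩ := hc
      exact Finset.mem_union_right _ (Finset.mem_image.2 ⟨u, by simpa using hu, hcu⟩)
  calc k = (Finset.Icc 1 k).card := by simp
    _ ≤ _ := Finset.card_le_card hsub
    _ ≤ (missing Γ k ψ v).card + ((Γ.neighborFinset v).image (fun u => ψ s(v, u))).card :=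
        Finset.card_union_le _ _
    _ ≤ (missing Γ k ψ v).card + Γ.degree v := by
        exact Nat.add_le_add_left (le_trans (Finset.card_image_le) (le_of_eq rfl)) _

/-- The subgraph of edges colored `a` or `b`. -/
def chainGraph (Γ : SimpleGraph V) (ψ : Sym2 V → ℕ) (a b : ℕ) : SimpleGraph V where
  Adj u v := Γ.Adj u v ∧ (ψ s(u, v) = a ∨ ψ s(u, v) = b)
  symm := ⟨by
    intro u v h
    exact ⟨h.1.symm, by rw [Sym2.eq_swap]; exact h.2⟩⟩
  loopless := ⟨fun v h => Γ.irrefl h.1⟩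

/-- Swap colors `a`,`b` on the component of `v₀`. -/
noncomputable def chainSwap (Γ : SimpleGraph V) (ψ : Sym2 V → ℕ) (a b : ℕ) (v₀ : V) :
    Sym2 V → ℕ :=
  fun e => if ∃ u w, e = s(u, w) ∧ (chainGraph Γ ψ a b).Adj u w ∧
      (chainGraph Γ ψ a b).Reachable v₀ u
    then (if ψ e = a then b else a) else ψ e

section chain
variable {Γ : SimpleGraph V} {ψ : Sym2 V → ℕ} {a b : ℕ} {v₀ : V}

lemma touched_iff {u w : V} :
    (∃ u' w', s(u, w) = s(u', w') ∧ (chainGraph Γ ψ a b).Adj u' w' ∧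
      (chainGraph Γ ψ a b).Reachable v₀ u') ↔
    ((chainGraph Γ ψ a b).Adj u w ∧ (chainGraph Γ ψ a b).Reachable v₀ u) := by
  constructor
  · rintro ⟨u', w', heq, hadj, hreach⟩
    rcases Sym2.eq_iff.1 heq with ⟨rfl, rfl⟩ | ⟨rfl, rfl⟩
    · exact ⟨hadj, hreach⟩
    · exact ⟨hadj.symm, hreach.trans hadj.reachable⟩
  · rintro ⟨hadj, hreach⟩
    exact ⟨u, w, rfl, hadj, hreach⟩

lemma chainSwap_touched {u w : V} (hadj : (chainGraph Γ ψ a b).Adj u w)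
    (hreach : (chainGraph Γ ψ a b).Reachable v₀ u) :
    chainSwap Γ ψ a b v₀ s(u, w) = if ψ s(u, w) = a then b else a := by
  rw [chainSwap, if_pos (touched_iff.2 ⟨hadj, hreach⟩)]

lemma chainSwap_untouched {u w : V}
    (h : ¬((chainGraph Γ ψ a b).Adj u w ∧ (chainGraph Γ ψ a b).Reachable v₀ u)) :
    chainSwap Γ ψ a b v₀ s(u, w) = ψ s(u, w) := by
  rw [chainSwap, if_neg (fun hx => h (touched_iff.1 hx))]

lemma chainSwap_proper {k : ℕ} (hψ : IsProperEdgeColoring Γ k ψ)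
    (ha : a ∈ Finset.Icc 1 k) (hb : b ∈ Finset.Icc 1 k) (hab : a ≠ b) :
    IsProperEdgeColoring Γ k (chainSwap Γ ψ a b v₀) := by
  constructor
  · intro e he
    rw [chainSwap]
    split
    · split <;> assumption
    · exact hψ.1 e he
  · intro e he f hf hef ⟨v, hve, hvf⟩
    obtain ⟨u1, rfl⟩ := Sym2.mem_iff_exists.1 hve
    obtain ⟨u2, rfl⟩ := Sym2.mem_iff_exists.1 hvf
    rw [SimpleGraph.mem_edgeSet] at he hf
    have hu12 : u1 ≠ u2 := fun h => hef (by rw [h])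
    have horig := proper_ne_colors hψ he hf hu12
    by_cases h1 : (chainGraph Γ ψ a b).Adj v u1 ∧ (chainGraph Γ ψ a b).Reachable v₀ v <;>
      by_cases h2 : (chainGraph Γ ψ a b).Adj v u2 ∧ (chainGraph Γ ψ a b).Reachable v₀ v
    · rw [chainSwap_touched h1.1 h1.2, chainSwap_touched h2.1 h2.2]
      rcases h1.1.2 with hA | hA <;> rcases h2.1.2 with hB | hB
      · exact absurd (hA.trans hB.symm) horig
      · simp [hA, hB, hab, Ne.symm hab]
      · simp [hA, hB, hab, Ne.symm hab]
      · exact absurd (hA.trans hB.symm) horig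
    · rw [chainSwap_touched h1.1 h1.2, chainSwap_untouched h2]
      have hnadj : ¬ (chainGraph Γ ψ a b).Adj v u2 := fun hA => h2 ⟨hA, h1.2⟩
      have hval : ψ s(v, u2) ≠ a ∧ ψ s(v, u2) ≠ b := by
        constructor <;> intro hv' <;> exact hnadj ⟨hf, by simp [hv']⟩
      split
      · exact (hval.2).symm
      · exact (hval.1).symm
    · rw [chainSwap_untouched h1, chainSwap_touched h2.1 h2.2]
      have hnadj : ¬ (chainGraph Γ ψ a b).Adj v u1 := fun hA => h1 ⟨hA, h2.2⟩
      have hval : ψ s(v, u1) ≠ a ∧ ψ s(v, u1) ≠ b := by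
        constructor <;> intro hv' <;> exact hnadj ⟨he, by simp [hv']⟩
      split
      · exact hval.2
      · exact hval.1
    · rw [chainSwap_untouched h1, chainSwap_untouched h2]
      exact horig
end chain

section chain2
variable {Γ : SimpleGraph V} {ψ : Sym2 V → ℕ} {a b : ℕ} {v₀ : V} {k : ℕ}

/-- M1: missing sets don't change outside the swapped component. -/
lemma missing_chainSwap_of_not_reach {v : V}
    (h : ¬ (chainGraph Γ ψ a b).Reachable v₀ v) :
    missing Γ k (chainSwap Γ ψ a b v₀) v = missing Γ k ψ v := by
  unfold missing
  apply Finset.filter_congr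
  intro c _
  apply forall_congr'
  intro u
  by_cases hu : Γ.Adj v u
  · simp only [hu, true_implies]
    rw [chainSwap_untouched (fun hx => h hx.2)]
  · simp [hu]

/-- M3: colors other than `a`,`b` are unaffected by the swap. -/
lemma missing_chainSwap_of_ne {v : V} {c : ℕ} (hca : c ≠ a) (hcb : c ≠ b) :
    (c ∈ missing Γ k (chainSwap Γ ψ a b v₀) v ↔ c ∈ missing Γ k ψ v) := by
  rw [mem_missing, mem_missing, and_congr_right_iff]
  intro _
  apply forall_congr'
  intro u
  by_cases hu : Γ.Adj v u
  · simp only [hu, true_implies]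
    by_cases ht : (chainGraph Γ ψ a b).Adj v u ∧ (chainGraph Γ ψ a b).Reachable v₀ v
    · have hv1 : ψ s(v, u) ≠ c := by
        rcases ht.1.2 with h | h <;> rw [h] <;> [exact Ne.symm hca; exact Ne.symm hcb]
      have hv2 : (if ψ s(v, u) = a then b else a) ≠ c := by
        split <;> [exact Ne.symm hcb; exact Ne.symm hca]
      rw [chainSwap_touched ht.1 ht.2]
      exact iff_of_true hv2 hv1
    · rw [chainSwap_untouched ht]
  · simp [hu]

/-- M2: after the swap, `a` is missing where `b` was missing (inside the component). -/
lemma a_missing_chainSwap {v : V} (hab : a ≠ b)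
    (hreach : (chainGraph Γ ψ a b).Reachable v₀ v)
    (hbm : b ∈ missing Γ k ψ v) (ha : a ∈ Finset.Icc 1 k) :
    a ∈ missing Γ k (chainSwap Γ ψ a b v₀) v := by
  rw [mem_missing]
  refine ⟨ha, fun u hu => ?_⟩
  by_cases hA : ψ s(v, u) = a
  · have hadj : (chainGraph Γ ψ a b).Adj v u := ⟨hu, Or.inl hA⟩
    rw [chainSwap_touched hadj hreach, if_pos hA]
    exact Ne.symm hab
  · by_cases hB : ψ s(v, u) = b
    · exact absurd hB ((mem_missing.1 hbm).2 u hu)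
    · have hnadj : ¬ (chainGraph Γ ψ a b).Adj v u := fun h => by
        rcases h.2 with h' | h'
        exacts [hA h', hB h']
      rw [chainSwap_untouched (fun hx => hnadj hx.1)]
      exact hA

lemma chainGraph_degree_le_two [Fintype V] (hψ : IsProperEdgeColoring Γ k ψ) (hab : a ≠ b)
    (v : V) : (chainGraph Γ ψ a b).degree v ≤ 2 := by
  have hsub : ∀ u ∈ (chainGraph Γ ψ a b).neighborFinset v,
      (fun u => ψ s(v, u)) u ∈ ({a, b} : Finset ℕ) := by
    intro u hu
    rw [SimpleGraph.mem_neighborFinset] at hu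
    rcases hu.2 with h | h <;> simp [h]
  have hinj : Set.InjOn (fun u => ψ s(v, u)) ((chainGraph Γ ψ a b).neighborFinset v) := by
    intro u1 h1 u2 h2 heq
    by_contra hne
    rw [Finset.mem_coe, SimpleGraph.mem_neighborFinset] at h1 h2
    exact proper_ne_colors hψ h1.1 h2.1 hne heq
  calc (chainGraph Γ ψ a b).degree v
      ≤ ({a, b} : Finset ℕ).card := Finset.card_le_card_of_injOn _ hsub hinj
    _ ≤ 2 := le_trans (Finset.card_insert_le _ _) (by simp)

lemma chainGraph_degree_le_one [Fintype V] (hψ : IsProperEdgeColoring Γ k ψ)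
    {v : V} (hm : a ∈ missing Γ k ψ v ∨ b ∈ missing Γ k ψ v) :
    (chainGraph Γ ψ a b).degree v ≤ 1 := by
  have hinj : Set.InjOn (fun u => ψ s(v, u)) ((chainGraph Γ ψ a b).neighborFinset v) := by
    intro u1 h1 u2 h2 heq
    by_contra hne
    rw [Finset.mem_coe, SimpleGraph.mem_neighborFinset] at h1 h2
    exact proper_ne_colors hψ h1.1 h2.1 hne heq
  rcases hm with hm | hm
  · have hsub : ∀ u ∈ (chainGraph Γ ψ a b).neighborFinset v,
        (fun u => ψ s(v, u)) u ∈ ({b} : Finset ℕ) := by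
      intro u hu
      rw [SimpleGraph.mem_neighborFinset] at hu
      rcases hu.2 with h | h
      · exact absurd h ((mem_missing.1 hm).2 u hu.1)
      · simp [h]
    exact le_trans (Finset.card_le_card_of_injOn _ hsub hinj) (by simp)
  · have hsub : ∀ u ∈ (chainGraph Γ ψ a b).neighborFinset v,
        (fun u => ψ s(v, u)) u ∈ ({a} : Finset ℕ) := by
      intro u hu
      rw [SimpleGraph.mem_neighborFinset] at hu
      rcases hu.2 with h | h
      · simp [h]
      · exact absurd h ((mem_missing.1 hm).2 u hu.1)
    exact le_trans (Finset.card_le_card_of_injOn _ hsub hinj) (by simp)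

end chain2


section critical
variable [Fintype V] {G : SimpleGraph V} {Δ : ℕ} {x y : V} {ψ : Sym2 V → ℕ}

/-- L1: no color can be missing at both ends of the uncolored edge. -/
lemma no_common_missing (hc : EdgeCritical G Δ) (hxy : G.Adj x y)
    (hψ : IsProperEdgeColoring (G.deleteEdges {s(x, y)}) Δ ψ) {c : ℕ}
    (hx : c ∈ missing (G.deleteEdges {s(x, y)}) Δ ψ x)
    (hy : c ∈ missing (G.deleteEdges {s(x, y)}) Δ ψ y) : False := by
  classical
  set G' := G.deleteEdges {s(x, y)} with hG'
  have hmemG' : ∀ e ∈ G.edgeSet, e ≠ s(x, y) → e ∈ G'.edgeSet := by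
    intro e he hne
    rw [hG', SimpleGraph.edgeSet_deleteEdges]
    exact ⟨he, by simpa using hne⟩
  set ψ₂ := Function.update ψ s(x, y) c with hψ₂
  have hval : ∀ e, e ≠ s(x, y) → ψ₂ e = ψ e := fun e h => Function.update_of_ne h _ _
  have hvalself : ψ₂ s(x, y) = c := Function.update_self _ _ _
  apply hc.2.1
  refine ⟨ψ₂, ?_, ?_⟩
  · intro e he
    by_cases h : e = s(x, y)
    · rw [h, hvalself]
      exact (mem_missing.1 hx).1
    · rw [hval e h]; exact hψ.1 e (hmemG' e he h)
  · intro e he f hf hef ⟨v, hve, hvf⟩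
    have key : ∀ g ∈ G.edgeSet, g ≠ s(x, y) → ∀ w, w ∈ s(x, y) → w ∈ g → ψ g ≠ c := by
      intro g hg hgne w hw hwg
      obtain ⟨u, rfl⟩ := Sym2.mem_iff_exists.1 hwg
      have hadj : G'.Adj w u := (SimpleGraph.mem_edgeSet _).1 (hmemG' _ hg hgne)
      rcases Sym2.mem_iff.1 hw with rfl | rfl
      · exact (mem_missing.1 hx).2 u hadj
      · exact (mem_missing.1 hy).2 u hadj
    by_cases h1 : e = s(x, y) <;> by_cases h2 : f = s(x, y)
    · exact absurd (h1.trans h2.symm) hef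
    · rw [h1, hvalself, hval f h2]
      exact fun hcontra => key f hf h2 v (h1 ▸ hve) hvf hcontra.symm
    · rw [hval e h1, h2, hvalself]
      exact key e he h1 v (h2 ▸ hvf) hve
    · rw [hval e h1, hval f h2]
      exact hψ.2 e (hmemG' e he h1) f (hmemG' f hf h2) hef ⟨v, hve, hvf⟩

/-- L2: recoloring an edge `yz` with a color missing at both its ends frees its old
color at `y`; if that color is also missing at `x`, contradiction. -/
lemma recolor_contra (hc : EdgeCritical G Δ) (hxy : G.Adj x y)
    (hψ : IsProperEdgeColoring (G.deleteEdges {s(x, y)}) Δ ψ) {z : V}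
    (hz : G.Adj y z) (hzx : z ≠ x) {β : ℕ}
    (hβy : β ∈ missing (G.deleteEdges {s(x, y)}) Δ ψ y)
    (hβz : β ∈ missing (G.deleteEdges {s(x, y)}) Δ ψ z)
    (hα : ψ s(y, z) ∈ missing (G.deleteEdges {s(x, y)}) Δ ψ x) : False := by
  classical
  set G' := G.deleteEdges {s(x, y)} with hG'
  have hyzne : s(y, z) ≠ s(x, y) := by
    intro h
    rcases Sym2.eq_iff.1 h with ⟨h1, _⟩ | ⟨_, h2⟩
    · exact hxy.ne' h1
    · exact hzx h2
  have hyz' : G'.Adj y z := by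
    rw [hG', SimpleGraph.deleteEdges_adj]
    exact ⟨hz, by simpa using hyzne⟩
  set ψ₂ := Function.update ψ s(y, z) β with hψ₂
  have hval : ∀ e, e ≠ s(y, z) → ψ₂ e = ψ e := fun e h => Function.update_of_ne h _ _
  have hvalself : ψ₂ s(y, z) = β := Function.update_self _ _ _
  have hψ₂p : IsProperEdgeColoring G' Δ ψ₂ := by
    constructor
    · intro e he
      by_cases h : e = s(y, z)
      · rw [h, hvalself]; exact (mem_missing.1 hβy).1
      · rw [hval e h]; exact hψ.1 e he
    · intro e he f hf hef ⟨v, hve, hvf⟩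
      have key : ∀ g ∈ G'.edgeSet, g ≠ s(y, z) → ∀ w, w ∈ s(y, z) → w ∈ g → ψ g ≠ β := by
        intro g hg hgne w hw hwg
        obtain ⟨u, rfl⟩ := Sym2.mem_iff_exists.1 hwg
        have hadj : G'.Adj w u := (SimpleGraph.mem_edgeSet _).1 hg
        rcases Sym2.mem_iff.1 hw with rfl | rfl
        · exact (mem_missing.1 hβy).2 u hadj
        · exact (mem_missing.1 hβz).2 u hadj
      by_cases h1 : e = s(y, z) <;> by_cases h2 : f = s(y, z)
      · exact absurd (h1.trans h2.symm) hef
      · rw [h1, hvalself, hval f h2]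
        exact fun hcontra => key f hf h2 v (h1 ▸ hve) hvf hcontra.symm
      · rw [hval e h1, h2, hvalself]
        exact key e he h1 v (h2 ▸ hvf) hve
      · rw [hval e h1, hval f h2]
        exact hψ.2 e he f hf hef ⟨v, hve, hvf⟩
  have hαx : ψ s(y, z) ∈ missing G' Δ ψ₂ x := by
    rw [mem_missing]
    refine ⟨(mem_missing.1 hα).1, fun u hu => ?_⟩
    have hne : s(x, u) ≠ s(y, z) := by
      intro h
      rcases Sym2.eq_iff.1 h with ⟨h1, _⟩ | ⟨h1, _⟩
      · exact hxy.ne h1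
      · exact hzx h1.symm
    rw [hval _ hne]
    exact (mem_missing.1 hα).2 u hu
  have hαy : ψ s(y, z) ∈ missing G' Δ ψ₂ y := by
    rw [mem_missing]
    refine ⟨(mem_missing.1 hα).1, fun u hu => ?_⟩
    by_cases huz : u = z
    · have h1 : ψ₂ s(y, u) = β := by rw [huz]; exact Function.update_self _ _ _
      rw [h1]
      exact Ne.symm ((mem_missing.1 hβy).2 z hyz')
    · rw [hval _ (fun h => huz (Sym2.congr_right.1 h))]
      exact proper_ne_colors hψ hu hyz' huz
  exact no_common_missing hc hxy hψ₂p hαx hαy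

end critical

section fan
variable [Fintype V] {G : SimpleGraph V} {Δ : ℕ} {x y : V} {ψ : Sym2 V → ℕ}

lemma adj_deleteEdges_of_ne {z : V} (hxy : G.Adj x y) (hz : G.Adj y z) (hzx : z ≠ x) :
    (G.deleteEdges {s(x, y)}).Adj y z := by
  rw [SimpleGraph.deleteEdges_adj]
  refine ⟨hz, ?_⟩
  simp only [Set.mem_singleton_iff]
  intro h
  rcases Sym2.eq_iff.1 h with ⟨h1, _⟩ | ⟨_, h2⟩
  · exact hxy.ne' h1
  · exact hzx h2

lemma deleteEdges_degree_succ_le (hxy : G.Adj x y) :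
    (G.deleteEdges {s(x, y)}).degree x + 1 ≤ G.degree x := by
  classical
  have hsub : (G.deleteEdges {s(x, y)}).neighborFinset x ⊆ (G.neighborFinset x).erase y := by
    intro u hu
    rw [SimpleGraph.mem_neighborFinset, SimpleGraph.deleteEdges_adj] at hu
    rw [Finset.mem_erase, SimpleGraph.mem_neighborFinset]
    refine ⟨fun h => ?_, hu.1⟩
    exact hu.2 (by rw [h]; exact Set.mem_singleton _)
  have hymem : y ∈ G.neighborFinset x := (SimpleGraph.mem_neighborFinset _ _ _).2 hxy
  have h1 : ((G.neighborFinset x).erase y).card = G.degree x - 1 :=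
    Finset.card_erase_of_mem hymem
  have h2 : 1 ≤ G.degree x := Finset.card_pos.2 ⟨y, hymem⟩
  have h3 := Finset.card_le_card hsub
  unfold SimpleGraph.degree at *
  omega

lemma deleteEdges_degree_le (s : Set (Sym2 V)) (v : V) :
    (G.deleteEdges s).degree v ≤ G.degree v := by
  classical
  apply Finset.card_le_card
  intro u hu
  rw [SimpleGraph.mem_neighborFinset] at *
  exact ((SimpleGraph.deleteEdges_adj).1 hu).1

lemma missing_y_nonempty (hc : EdgeCritical G Δ) (hxy : G.Adj x y) :
    (missing (G.deleteEdges {s(x, y)}) Δ ψ y).Nonempty := by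
  have hdy : (G.deleteEdges {s(x, y)}).degree y + 1 ≤ G.degree y := by
    have : s(x, y) = s(y, x) := Sym2.eq_swap
    rw [this]
    exact deleteEdges_degree_succ_le hxy.symm
  have hdyΔ : G.degree y ≤ Δ := hc.1 ▸ G.degree_le_maxDegree y
  have h1 : Δ ≤ (missing (G.deleteEdges {s(x, y)}) Δ ψ y).card + (G.deleteEdges {s(x, y)}).degree y := by
    convert le_card_missing (G.deleteEdges {s(x, y)}) Δ ψ y
  rw [← Finset.card_pos]
  omega

/-- Fan fact 1: if `ψ(yz)` is missing at `x`, then no color is missing at both `x` and `z`. -/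
lemma fan_disjoint₁ (hc : EdgeCritical G Δ) (hxy : G.Adj x y)
    (hψ : IsProperEdgeColoring (G.deleteEdges {s(x, y)}) Δ ψ) {z : V}
    (hz : G.Adj y z) (hzx : z ≠ x)
    (hα : ψ s(y, z) ∈ missing (G.deleteEdges {s(x, y)}) Δ ψ x) {c : ℕ}
    (hcx : c ∈ missing (G.deleteEdges {s(x, y)}) Δ ψ x)
    (hcz : c ∈ missing (G.deleteEdges {s(x, y)}) Δ ψ z) : False := by
  classical
  set G' := G.deleteEdges {s(x, y)} with hG'
  obtain ⟨β, hβy⟩ := missing_y_nonempty (ψ := ψ) hc hxy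
  have hyz' : G'.Adj y z := adj_deleteEdges_of_ne hxy hz hzx
  have hcy : c ∉ missing G' Δ ψ y := fun h => no_common_missing hc hxy hψ hcx h
  have hβz : β ∉ missing G' Δ ψ z := fun h => recolor_contra hc hxy hψ hz hzx hβy h hα
  have hβc : β ≠ c := fun h => hcy (h ▸ hβy)
  have hβI : β ∈ Finset.Icc 1 Δ := (mem_missing.1 hβy).1
  have hcI : c ∈ Finset.Icc 1 Δ := (mem_missing.1 hcx).1
  have hαβ : ψ s(y, z) ≠ β := (mem_missing.1 hβy).2 z hyz'
  have hαc : ψ s(y, z) ≠ c := by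
    have h := (mem_missing.1 hcz).2 y hyz'.symm
    rwa [Sym2.eq_swap] at h
  have hdeg2 : ∀ v, (chainGraph G' ψ β c).degree v ≤ 2 := chainGraph_degree_le_two hψ hβc
  have hdx1 : (chainGraph G' ψ β c).degree x ≤ 1 := chainGraph_degree_le_one hψ (Or.inr hcx)
  have hdz1 : (chainGraph G' ψ β c).degree z ≤ 1 := chainGraph_degree_le_one hψ (Or.inr hcz)
  have hdy1 : (chainGraph G' ψ β c).degree y ≤ 1 := chainGraph_degree_le_one hψ (Or.inl hβy)
  by_cases hxyR : (chainGraph G' ψ β c).Reachable x y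
  · by_cases hxzR : (chainGraph G' ψ β c).Reachable x z
    · exact no_three_pendant hdeg2 hxy.ne (Ne.symm hzx) hz.ne hdx1 hdy1 hdz1 hxyR hxzR
    · have hzyR : ¬ (chainGraph G' ψ β c).Reachable z y := fun h => hxzR (hxyR.trans h.symm)
      have hzxR : ¬ (chainGraph G' ψ β c).Reachable z x := fun h => hxzR h.symm
      have hψ'p : IsProperEdgeColoring G' Δ (chainSwap G' ψ β c z) :=
        chainSwap_proper hψ hβI hcI hβc
      have hβz' : β ∈ missing G' Δ (chainSwap G' ψ β c z) z :=
        a_missing_chainSwap hβc (SimpleGraph.Reachable.refl z) hcz hβI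
      have hβy' : β ∈ missing G' Δ (chainSwap G' ψ β c z) y := by
        rw [missing_chainSwap_of_not_reach hzyR]; exact hβy
      have hval : chainSwap G' ψ β c z s(y, z) = ψ s(y, z) :=
        chainSwap_untouched (fun hx' => by rcases hx'.1.2 with h | h
                                           exacts [hαβ h, hαc h])
      have hαx' : chainSwap G' ψ β c z s(y, z) ∈ missing G' Δ (chainSwap G' ψ β c z) x := by
        rw [hval, missing_chainSwap_of_not_reach hzxR]; exact hα
      exact recolor_contra hc hxy hψ'p hz hzx hβy' hβz' hαx'
  · have hψ'p : IsProperEdgeColoring G' Δ (chainSwap G' ψ β c x) :=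
      chainSwap_proper hψ hβI hcI hβc
    have hβx' : β ∈ missing G' Δ (chainSwap G' ψ β c x) x :=
      a_missing_chainSwap hβc (SimpleGraph.Reachable.refl x) hcx hβI
    have hβy' : β ∈ missing G' Δ (chainSwap G' ψ β c x) y := by
      rw [missing_chainSwap_of_not_reach hxyR]; exact hβy
    exact no_common_missing hc hxy hψ'p hβx' hβy'

/-- Fan fact 2: two fan vertices (colors missing at x) have disjoint missing sets. -/
lemma fan_disjoint₂ (hc : EdgeCritical G Δ) (hxy : G.Adj x y)
    (hψ : IsProperEdgeColoring (G.deleteEdges {s(x, y)}) Δ ψ) {z1 z2 : V}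
    (hz1 : G.Adj y z1) (hz1x : z1 ≠ x) (hz2 : G.Adj y z2) (hz2x : z2 ≠ x) (hz12 : z1 ≠ z2)
    (hα1 : ψ s(y, z1) ∈ missing (G.deleteEdges {s(x, y)}) Δ ψ x)
    (hα2 : ψ s(y, z2) ∈ missing (G.deleteEdges {s(x, y)}) Δ ψ x) {c : ℕ}
    (hcz1 : c ∈ missing (G.deleteEdges {s(x, y)}) Δ ψ z1)
    (hcz2 : c ∈ missing (G.deleteEdges {s(x, y)}) Δ ψ z2) : False := by
  classical
  set G' := G.deleteEdges {s(x, y)} with hG'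
  obtain ⟨β, hβy⟩ := missing_y_nonempty (ψ := ψ) hc hxy
  have hyz1' : G'.Adj y z1 := adj_deleteEdges_of_ne hxy hz1 hz1x
  have hyz2' : G'.Adj y z2 := adj_deleteEdges_of_ne hxy hz2 hz2x
  have hcy : c ∉ missing G' Δ ψ y := fun h => recolor_contra hc hxy hψ hz1 hz1x h hcz1 hα1
  have hβz1 : β ∉ missing G' Δ ψ z1 := fun h => recolor_contra hc hxy hψ hz1 hz1x hβy h hα1
  have hβz2 : β ∉ missing G' Δ ψ z2 := fun h => recolor_contra hc hxy hψ hz2 hz2x hβy h hα2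
  have hβc : β ≠ c := fun h => hcy (h ▸ hβy)
  have hβI : β ∈ Finset.Icc 1 Δ := (mem_missing.1 hβy).1
  have hcI : c ∈ Finset.Icc 1 Δ := (mem_missing.1 hcz1).1
  have hα1β : ψ s(y, z1) ≠ β := (mem_missing.1 hβy).2 z1 hyz1'
  have hα2β : ψ s(y, z2) ≠ β := (mem_missing.1 hβy).2 z2 hyz2'
  have hα1c : ψ s(y, z1) ≠ c := by
    have h := (mem_missing.1 hcz1).2 y hyz1'.symm
    rwa [Sym2.eq_swap] at h
  have hα2c : ψ s(y, z2) ≠ c := by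
    have h := (mem_missing.1 hcz2).2 y hyz2'.symm
    rwa [Sym2.eq_swap] at h
  have hdeg2 : ∀ v, (chainGraph G' ψ β c).degree v ≤ 2 := chainGraph_degree_le_two hψ hβc
  have hdz11 : (chainGraph G' ψ β c).degree z1 ≤ 1 := chainGraph_degree_le_one hψ (Or.inr hcz1)
  have hdz21 : (chainGraph G' ψ β c).degree z2 ≤ 1 := chainGraph_degree_le_one hψ (Or.inr hcz2)
  have hdy1 : (chainGraph G' ψ β c).degree y ≤ 1 := chainGraph_degree_le_one hψ (Or.inl hβy)
  by_cases h1R : (chainGraph G' ψ β c).Reachable z1 y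
  · by_cases h2R : (chainGraph G' ψ β c).Reachable z2 y
    · exact no_three_pendant hdeg2 hz1.ne hz2.ne (fun h => hz12 h)
        hdy1 hdz11 hdz21 h1R.symm h2R.symm
    · have hψ'p : IsProperEdgeColoring G' Δ (chainSwap G' ψ β c z2) :=
        chainSwap_proper hψ hβI hcI hβc
      have hβz2' : β ∈ missing G' Δ (chainSwap G' ψ β c z2) z2 :=
        a_missing_chainSwap hβc (SimpleGraph.Reachable.refl z2) hcz2 hβI
      have hβy' : β ∈ missing G' Δ (chainSwap G' ψ β c z2) y := by
        rw [missing_chainSwap_of_not_reach h2R]; exact hβy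
      have hval : chainSwap G' ψ β c z2 s(y, z2) = ψ s(y, z2) :=
        chainSwap_untouched (fun hx' => by rcases hx'.1.2 with h | h
                                           exacts [hα2β h, hα2c h])
      have hαx' : chainSwap G' ψ β c z2 s(y, z2) ∈ missing G' Δ (chainSwap G' ψ β c z2) x := by
        rw [hval]
        exact (missing_chainSwap_of_ne hα2β hα2c).2 hα2
      exact recolor_contra hc hxy hψ'p hz2 hz2x hβy' hβz2' hαx'
  · have hψ'p : IsProperEdgeColoring G' Δ (chainSwap G' ψ β c z1) :=
      chainSwap_proper hψ hβI hcI hβc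
    have hβz1' : β ∈ missing G' Δ (chainSwap G' ψ β c z1) z1 :=
      a_missing_chainSwap hβc (SimpleGraph.Reachable.refl z1) hcz1 hβI
    have hβy' : β ∈ missing G' Δ (chainSwap G' ψ β c z1) y := by
      rw [missing_chainSwap_of_not_reach h1R]; exact hβy
    have hval : chainSwap G' ψ β c z1 s(y, z1) = ψ s(y, z1) :=
      chainSwap_untouched (fun hx' => by rcases hx'.1.2 with h | h
                                         exacts [hα1β h, hα1c h])
    have hαx' : chainSwap G' ψ β c z1 s(y, z1) ∈ missing G' Δ (chainSwap G' ψ β c z1) x := by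
      rw [hval]
      exact (missing_chainSwap_of_ne hα1β hα1c).2 hα1
    exact recolor_contra hc hxy hψ'p hz1 hz1x hβy' hβz1' hαx'

end fan

set_option maxHeartbeats 1000000 in
lemma at_most_one_small [Fintype V] {G : SimpleGraph V} {Δ : ℕ} (hc : EdgeCritical G Δ)
    {x y : V} (hxy : G.Adj x y) {ψ : Sym2 V → ℕ}
    (hψ : IsProperEdgeColoring (G.deleteEdges {s(x, y)}) Δ ψ) {q : ℝ}
    (hq2 : q ≤ (Δ : ℝ) - (G.degree x : ℝ) / 2 - 2) {w1 w2 : V}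
    (h1 : G.Adj y w1) (h1x : w1 ≠ x) (hd1 : (G.degree w1 : ℝ) < q)
    (hm1 : ψ s(y, w1) ∈ missing (G.deleteEdges {s(x, y)}) Δ ψ x)
    (h2 : G.Adj y w2) (h2x : w2 ≠ x) (hd2 : (G.degree w2 : ℝ) < q)
    (hm2 : ψ s(y, w2) ∈ missing (G.deleteEdges {s(x, y)}) Δ ψ x) (hne : w1 ≠ w2) : False := by
  classical
  set G' := G.deleteEdges {s(x, y)} with hG'
  have hD1 : Disjoint (missing G' Δ ψ x) (missing G' Δ ψ w1) :=
    Finset.disjoint_left.2 (fun _ hca hcb => fan_disjoint₁ hc hxy hψ h1 h1x hm1 hca hcb)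
  have hD2 : Disjoint (missing G' Δ ψ x) (missing G' Δ ψ w2) :=
    Finset.disjoint_left.2 (fun _ hca hcb => fan_disjoint₁ hc hxy hψ h2 h2x hm2 hca hcb)
  have hD3 : Disjoint (missing G' Δ ψ w1) (missing G' Δ ψ w2) :=
    Finset.disjoint_left.2
      (fun _ hca hcb => fan_disjoint₂ hc hxy hψ h1 h1x h2 h2x hne hm1 hm2 hca hcb)
  have hsub : missing G' Δ ψ x ∪ missing G' Δ ψ w1 ∪ missing G' Δ ψ w2 ⊆ Finset.Icc 1 Δ := by
    intro c hc'
    rcases Finset.mem_union.1 hc' with hc' | hc'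
    · rcases Finset.mem_union.1 hc' with hc' | hc' <;> exact (mem_missing.1 hc').1
    · exact (mem_missing.1 hc').1
  have hIcc : (Finset.Icc 1 Δ).card = Δ := by rw [Nat.card_Icc]; omega
  have hcard : (missing G' Δ ψ x).card + (missing G' Δ ψ w1).card +
      (missing G' Δ ψ w2).card ≤ Δ := by
    have h := Finset.card_le_card hsub
    rw [Finset.card_union_of_disjoint (Finset.disjoint_union_left.2 ⟨hD2, hD3⟩),
      Finset.card_union_of_disjoint hD1, hIcc] at h
    exact h
  have e1 : Δ ≤ (missing G' Δ ψ x).card + G'.degree x := by convert le_card_missing G' Δ ψ x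
  have e2 : Δ ≤ (missing G' Δ ψ w1).card + G'.degree w1 := by convert le_card_missing G' Δ ψ w1
  have e3 : Δ ≤ (missing G' Δ ψ w2).card + G'.degree w2 := by convert le_card_missing G' Δ ψ w2
  have e4 : G'.degree x + 1 ≤ G.degree x := by convert deleteEdges_degree_succ_le hxy
  have e5 : G'.degree w1 ≤ G.degree w1 := by convert deleteEdges_degree_le _ _
  have e6 : G'.degree w2 ≤ G.degree w2 := by convert deleteEdges_degree_le _ _
  have r0 : ((missing G' Δ ψ x).card : ℝ) + (missing G' Δ ψ w1).card +
      (missing G' Δ ψ w2).card ≤ (Δ : ℝ) := by exact_mod_cast hcard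
  have r1 : (Δ : ℝ) ≤ ((missing G' Δ ψ x).card : ℝ) + (G'.degree x : ℝ) := by exact_mod_cast e1
  have r2 : (Δ : ℝ) ≤ ((missing G' Δ ψ w1).card : ℝ) + (G'.degree w1 : ℝ) := by exact_mod_cast e2
  have r3 : (Δ : ℝ) ≤ ((missing G' Δ ψ w2).card : ℝ) + (G'.degree w2 : ℝ) := by exact_mod_cast e3
  have r4 : (G'.degree x : ℝ) + 1 ≤ (G.degree x : ℝ) := by exact_mod_cast e4
  have r5 : (G'.degree w1 : ℝ) ≤ (G.degree w1 : ℝ) := by exact_mod_cast e5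
  have r6 : (G'.degree w2 : ℝ) ≤ (G.degree w2 : ℝ) := by exact_mod_cast e6
  linarith

theorem stmt14 (G : SimpleGraph V) [Fintype V] (Δ : ℕ) (hc : EdgeCritical G Δ)
    (x y : V) (hxy : G.Adj x y) (φ : Sym2 V → ℕ)
    (hφ : IsProperEdgeColoring (G.deleteEdges {s(x, y)}) Δ φ)
    (q : ℝ) (hq0 : 0 < q)
    (hq1 : (Δ : ℝ) / 2 < q) (hq2 : q ≤ (Δ : ℝ) - (G.degree x : ℝ) / 2 - 2) :
    (Δ : ℝ) -
        ((Finset.univ.filter (fun w => G.Adj y w ∧ w ≠ x ∧ q ≤ (G.degree w : ℝ))).card : ℝ) - 1 ≤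
      (((Finset.univ.filter (fun z => G.Adj x z ∧ z ≠ y ∧
            φ s(x, z) ∈ missing (G.deleteEdges {s(x, y)}) Δ φ y)) ∪
        (Finset.univ.filter (fun z => G.Adj x z ∧ z ≠ y ∧
            φ s(x, z) ∉ missing (G.deleteEdges {s(x, y)}) Δ φ y ∧
            ∃ y', G.Adj y y' ∧ φ s(y, y') = φ s(x, z) ∧ (G.degree y' : ℝ) < q))).card : ℝ) := by
  classical
  set G' := G.deleteEdges {s(x, y)} with hG'
  have hxyne : x ≠ y := hxy.ne
  -- adjacency at y in G'
  have hadjy : ∀ u, G'.Adj y u ↔ (G.Adj y u ∧ u ≠ x) := by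
    intro u
    rw [hG', SimpleGraph.deleteEdges_adj]
    constructor
    · rintro ⟨hu1, hu2⟩
      refine ⟨hu1, fun h => hu2 ?_⟩
      subst h
      simp only [Set.mem_singleton_iff]
      exact Sym2.eq_swap
    · rintro ⟨hu1, hu2⟩
      refine ⟨hu1, fun h => ?_⟩
      rcases Sym2.eq_iff.1 (Set.mem_singleton_iff.1 h) with ⟨ha, _⟩ | ⟨_, hb⟩
      · exact hxyne ha.symm
      · exact hu2 hb
  -- adjacency at x in G'
  have hadjx : ∀ u, G'.Adj x u → (G.Adj x u ∧ u ≠ y) := by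
    intro u hu
    rw [hG', SimpleGraph.deleteEdges_adj] at hu
    refine ⟨hu.1, fun h => hu.2 ?_⟩
    subst h
    simp
  set Ny := Finset.univ.filter (fun w => G.Adj y w ∧ w ≠ x) with hNy
  set B := Finset.univ.filter (fun w => G.Adj y w ∧ w ≠ x ∧ q ≤ (G.degree w : ℝ)) with hB
  set Sm := Finset.univ.filter (fun w => G.Adj y w ∧ w ≠ x ∧ (G.degree w : ℝ) < q) with hSm
  have hBSmdisj : Disjoint B Sm := by
    rw [Finset.disjoint_left]
    intro w hw1 hw2
    rw [hB, Finset.mem_filter] at hw1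
    rw [hSm, Finset.mem_filter] at hw2
    linarith [hw1.2.2.2, hw2.2.2.2]
  have hBSm : B ∪ Sm = Ny := by
    ext w
    rw [hB, hSm, hNy, Finset.mem_union, Finset.mem_filter, Finset.mem_filter, Finset.mem_filter]
    constructor
    · rintro (⟨h1, h2, h3, _⟩ | ⟨h1, h2, h3, _⟩) <;> exact ⟨h1, h2, h3⟩
    · rintro ⟨h1, h2, h3⟩
      rcases le_or_gt q ((G.degree w : ℝ)) with h | h
      · exact Or.inl ⟨h1, h2, h3, h⟩
      · exact Or.inr ⟨h1, h2, h3, h⟩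
  have hNycard : Ny.card + 1 = G.degree y := by
    have hxm : x ∈ G.neighborFinset y := (SimpleGraph.mem_neighborFinset _ _ _).2 hxy.symm
    have hNyer : Ny = (G.neighborFinset y).erase x := by
      ext w
      rw [hNy, Finset.mem_filter, Finset.mem_erase, SimpleGraph.mem_neighborFinset]
      exact ⟨fun h => ⟨h.2.2, h.2.1⟩, fun h => ⟨Finset.mem_univ _, h.2, h.1⟩⟩
    have h1 : Ny.card = G.degree y - 1 := by rw [hNyer]; exact Finset.card_erase_of_mem hxm
    have h2 : 1 ≤ G.degree y := Finset.card_pos.2 ⟨x, hxm⟩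
    omega
  -- colors present at y
  set cy := Ny.image (fun w => φ s(y, w)) with hcy
  have hNyadj : ∀ w ∈ Ny, G'.Adj y w := by
    intro w hw
    rw [hNy, Finset.mem_filter] at hw
    exact (hadjy w).2 ⟨hw.2.1, hw.2.2⟩
  have hcycard : cy.card = Ny.card := by
    rw [hcy]
    apply Finset.card_image_of_injOn
    intro w1 hw1 w2 hw2 heq
    by_contra hne
    exact proper_ne_colors hφ (hNyadj w1 hw1) (hNyadj w2 hw2) hne heq
  have hMycydisj : Disjoint (missing G' Δ φ y) cy := by
    rw [Finset.disjoint_left]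
    intro c hc1 hc2
    rw [hcy, Finset.mem_image] at hc2
    obtain ⟨w, hw, hwc⟩ := hc2
    exact (mem_missing.1 hc1).2 w (hNyadj w hw) hwc
  have hMycy : missing G' Δ φ y ∪ cy = Finset.Icc 1 Δ := by
    ext c
    constructor
    · intro hc'
      rcases Finset.mem_union.1 hc' with hc' | hc'
      · exact (mem_missing.1 hc').1
      · rw [hcy, Finset.mem_image] at hc'
        obtain ⟨w, hw, hwc⟩ := hc'
        rw [← hwc]
        exact hφ.1 _ ((SimpleGraph.mem_edgeSet _).2 (hNyadj w hw))
    · intro hc'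
      by_cases h : ∀ u, G'.Adj y u → φ s(y, u) ≠ c
      · exact Finset.mem_union_left _ (mem_missing.2 ⟨hc', h⟩)
      · push_neg at h
        obtain ⟨u, hu, huc⟩ := h
        apply Finset.mem_union_right
        rw [hcy, Finset.mem_image]
        refine ⟨u, ?_, huc⟩
        rw [hNy, Finset.mem_filter]
        have := (hadjy u).1 hu
        exact ⟨Finset.mem_univ _, this.1, this.2⟩
  have hMycard : (missing G' Δ φ y).card + Ny.card = Δ := by
    have h := congrArg Finset.card hMycy
    rw [Finset.card_union_of_disjoint hMycydisj, hcycard] at h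
    rw [h, Nat.card_Icc]
    omega
  set Z := Finset.univ.filter (fun z => G.Adj x z ∧ z ≠ y ∧
      φ s(x, z) ∈ missing G' Δ φ y) with hZ
  set S := Finset.univ.filter (fun z => G.Adj x z ∧ z ≠ y ∧
      φ s(x, z) ∉ missing G' Δ φ y ∧
      ∃ y', G.Adj y y' ∧ φ s(y, y') = φ s(x, z) ∧ (G.degree y' : ℝ) < q) with hS
  have hZSdisj : Disjoint Z S := by
    rw [Finset.disjoint_left]
    intro z hz1 hz2
    rw [hZ, Finset.mem_filter] at hz1
    rw [hS, Finset.mem_filter] at hz2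
    exact hz2.2.2.2.1 hz1.2.2.2
  -- |missing y| ≤ |Z|
  have hZge : (missing G' Δ φ y).card ≤ Z.card := by
    have hch : ∀ c ∈ missing G' Δ φ y, ∃ u, G'.Adj x u ∧ φ s(x, u) = c := by
      intro c hcm
      have hnx : c ∉ missing G' Δ φ x := fun h => no_common_missing hc hxy hφ h hcm
      rw [mem_missing, not_and_or] at hnx
      rcases hnx with h | h
      · exact absurd (mem_missing.1 hcm).1 h
      · push_neg at h
        exact h
    set f : ℕ → V := fun c =>
      if h : ∃ u, G'.Adj x u ∧ φ s(x, u) = c then h.choose else x with hf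
    apply Finset.card_le_card_of_injOn f
    · intro c hcm
      have hex := hch c hcm
      have hfc : G'.Adj x (f c) ∧ φ s(x, f c) = c := by
        rw [hf]
        simp only [hex, dif_pos]
        exact hex.choose_spec
      rw [hZ, Finset.mem_coe, Finset.mem_filter]
      have h2 := hadjx _ hfc.1
      exact ⟨Finset.mem_univ _, h2.1, h2.2, by rw [hfc.2]; exact hcm⟩
    · intro c1 h1 c2 h2 heq
      have hf1 : φ s(x, f c1) = c1 := by
        have hex := hch c1 h1
        rw [hf]; simp only [hex, dif_pos]; exact hex.choose_spec.2
      have hf2 : φ s(x, f c2) = c2 := by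
        have hex := hch c2 h2
        rw [hf]; simp only [hex, dif_pos]; exact hex.choose_spec.2
      rw [← hf1, ← hf2, heq]
  -- the small vertices whose color is present at x inject into S
  set Sm' := Sm.filter (fun w => φ s(y, w) ∉ missing G' Δ φ x) with hSm'
  have hSge : Sm'.card ≤ S.card := by
    have hch : ∀ w ∈ Sm', ∃ u, G'.Adj x u ∧ φ s(x, u) = φ s(y, w) := by
      intro w hw
      rw [hSm', Finset.mem_filter] at hw
      have hwNy : w ∈ Ny := by
        rw [hNy, Finset.mem_filter]
        rw [hSm, Finset.mem_filter] at hw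
        exact ⟨Finset.mem_univ _, hw.1.2.1, hw.1.2.2.1⟩
      have hIccw : φ s(y, w) ∈ Finset.Icc 1 Δ :=
        hφ.1 _ ((SimpleGraph.mem_edgeSet _).2 (hNyadj w hwNy))
      have h := hw.2
      rw [mem_missing, not_and_or] at h
      rcases h with h | h
      · exact absurd hIccw h
      · push_neg at h
        exact h
    set g : V → V := fun w =>
      if h : ∃ u, G'.Adj x u ∧ φ s(x, u) = φ s(y, w) then h.choose else x with hg
    apply Finset.card_le_card_of_injOn g
    · intro w hw
      have hex := hch w hw
      have hgw : G'.Adj x (g w) ∧ φ s(x, g w) = φ s(y, w) := by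
        rw [hg]; simp only [hex, dif_pos]; exact hex.choose_spec
      rw [hS, Finset.mem_coe, Finset.mem_filter]
      have h2 := hadjx _ hgw.1
      rw [hSm', Finset.mem_coe, Finset.mem_filter, hSm, Finset.mem_filter] at hw
      refine ⟨Finset.mem_univ _, h2.1, h2.2, ?_, w, hw.1.2.1, hgw.2.symm, hw.1.2.2.2⟩
      intro hmem
      have hwNy : w ∈ Ny := by
        rw [hNy, Finset.mem_filter]
        exact ⟨Finset.mem_univ _, hw.1.2.1, hw.1.2.2.1⟩
      exact (mem_missing.1 hmem).2 w (hNyadj w hwNy) hgw.2.symm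
    · intro w1 h1 w2 h2 heq
      have hg1 : φ s(x, g w1) = φ s(y, w1) := by
        have hex := hch w1 h1
        rw [hg]; simp only [hex, dif_pos]; exact hex.choose_spec.2
      have hg2 : φ s(x, g w2) = φ s(y, w2) := by
        have hex := hch w2 h2
        rw [hg]; simp only [hex, dif_pos]; exact hex.choose_spec.2
      have hcol : φ s(y, w1) = φ s(y, w2) := by rw [← hg1, ← hg2, heq]
      by_contra hne
      have hw1Ny : w1 ∈ Sm := by
        have h' := Finset.mem_coe.1 h1
        rw [hSm', Finset.mem_filter] at h'
        exact h'.1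
      have hw2Ny : w2 ∈ Sm := by
        have h' := Finset.mem_coe.1 h2
        rw [hSm', Finset.mem_filter] at h'
        exact h'.1
      rw [hSm, Finset.mem_filter] at hw1Ny hw2Ny
      exact proper_ne_colors hφ ((hadjy w1).2 ⟨hw1Ny.2.1, hw1Ny.2.2.1⟩)
        ((hadjy w2).2 ⟨hw2Ny.2.1, hw2Ny.2.2.1⟩) hne hcol
  -- at most one small vertex has its color missing at x
  have hSm1 : Sm.card ≤ Sm'.card + 1 := by
    have hsplit : Sm.filter (fun w => φ s(y, w) ∉ missing G' Δ φ x) ∪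
        Sm.filter (fun w => ¬ φ s(y, w) ∉ missing G' Δ φ x) = Sm :=
      Finset.filter_union_filter_not_eq _ _
    have hone : (Sm.filter (fun w => ¬ φ s(y, w) ∉ missing G' Δ φ x)).card ≤ 1 := by
      rw [Finset.card_le_one]
      intro w1 hw1 w2 hw2
      by_contra hne
      rw [Finset.mem_filter, not_not] at hw1 hw2
      have h1 := hw1.1; have h2 := hw2.1
      rw [hSm, Finset.mem_filter] at h1 h2
      exact at_most_one_small hc hxy hφ hq2 h1.2.1 h1.2.2.1 h1.2.2.2 hw1.2
        h2.2.1 h2.2.2.1 h2.2.2.2 hw2.2 hne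
    calc Sm.card = (Sm.filter (fun w => φ s(y, w) ∉ missing G' Δ φ x) ∪
        Sm.filter (fun w => ¬ φ s(y, w) ∉ missing G' Δ φ x)).card := by rw [hsplit]
      _ ≤ Sm'.card + (Sm.filter (fun w => ¬ φ s(y, w) ∉ missing G' Δ φ x)).card :=
          Finset.card_union_le _ _
      _ ≤ Sm'.card + 1 := by omega
  -- final counting
  have hBSmcard : B.card + Sm.card = Ny.card := by
    rw [← hBSm, Finset.card_union_of_disjoint hBSmdisj]
  have hfinal : Δ ≤ Z.card + S.card + B.card + 1 := by omega
  rw [Finset.card_union_of_disjoint hZSdisj]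
  have hfinalR : (Δ : ℝ) ≤ (Z.card : ℝ) + S.card + B.card + 1 := by exact_mod_cast hfinal
  push_cast
  linarith
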